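/- Let λ₁ ≥ ... ≥ λₙ > 0 and σ₁² ≥ ... ≥ σₙ² satisfy Schur–Horn majorization. Suppose λₙ < c ≤ c̃ < λ₁, let j* = max{ j : λⱼ ≥ c } and k* = max{ j : σⱼ² ≥ c̃ }, and assume j* < k*. Then j*·c + ∑_{i=j*+1}^n λᵢ < k*·c̃ + ∑_{i=k*+1}^n σᵢ². -/

import Mathlib

open Matrix Finset

theorem multi_lt_single_case6a
    (n : ℕ) (hn : 0 < n) (lam sq : Fin n → ℝ)
    (hlam_anti : Antitone lam) (hlam_pos : ∀ i, 0 < lam i) (hsq_anti : Antitone sq)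
    (hmaj : ∀ k : ℕ, k < n → ∑ i ∈ Finset.univ.filter (fun i : Fin n => (i : ℕ) < k), sq i ≤ ∑ i ∈ Finset.univ.filter (fun i : Fin n => (i : ℕ) < k), lam i)
    (heq : ∑ i, lam i = ∑ i, sq i)
    (c ctil : ℝ) (hc1 : lam ⟨n - 1, Nat.sub_lt hn one_pos⟩ < c) (hcc : c ≤ ctil)
    (hc2 : ctil < lam ⟨0, hn⟩)
    (jstar : ℕ) (hj_le : jstar ≤ n)
    (hj1 : ∀ i : Fin n, (i : ℕ) < jstar → c ≤ lam i)
    (hj2 : ∀ i : Fin n, jstar ≤ (i : ℕ) → lam i < c)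
    (kstar : ℕ) (hk_le : kstar ≤ n)
    (hk1 : ∀ i : Fin n, (i : ℕ) < kstar → ctil ≤ sq i)
    (hk2 : ∀ i : Fin n, kstar ≤ (i : ℕ) → sq i < ctil)
    (hjk : jstar < kstar) :
    (jstar : ℝ) * c + ∑ i ∈ Finset.univ.filter (fun i : Fin n => jstar ≤ (i : ℕ)), lam i <
      (kstar : ℝ) * ctil + ∑ i ∈ Finset.univ.filter (fun i : Fin n => kstar ≤ (i : ℕ)), sq i := by
  classical
  set L : ℕ → ℝ := fun i => if h : i < n then lam ⟨i, h⟩ else 0 with hL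
  set Q : ℕ → ℝ := fun i => if h : i < n then sq ⟨i, h⟩ else 0 with hQ
  have hLval : ∀ i : Fin n, L (i : ℕ) = lam i := by
    intro i; simp [hL, i.isLt]
  have hQval : ∀ i : Fin n, Q (i : ℕ) = sq i := by
    intro i; simp [hQ, i.isLt]
  -- rewrite filtered sums over Fin n as sums over Ico / range
  have key : ∀ (f : Fin n → ℝ) (F : ℕ → ℝ), (∀ i : Fin n, F (i : ℕ) = f i) →
      ∀ m : ℕ, (∑ i ∈ Finset.univ.filter (fun i : Fin n => m ≤ (i : ℕ)), f i)
        = ∑ i ∈ Finset.Ico m n, F i := by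
    intro f F hF m
    rw [Finset.sum_filter]
    have h1 : ∑ i : Fin n, (if m ≤ (i : ℕ) then f i else 0)
        = ∑ i ∈ Finset.range n, (if m ≤ i then F i else 0) := by
      rw [← Fin.sum_univ_eq_sum_range (fun j => if m ≤ j then F j else 0) n]
      exact Finset.sum_congr rfl (fun i _ => by by_cases h : m ≤ (i : ℕ) <;> simp [h, hF])
    rw [h1, ← Finset.sum_filter]
    congr 1
    ext j
    simp [Finset.mem_Ico, and_comm]
  have key' : ∀ (f : Fin n → ℝ) (F : ℕ → ℝ), (∀ i : Fin n, F (i : ℕ) = f i) →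
      ∀ m : ℕ, m ≤ n → (∑ i ∈ Finset.univ.filter (fun i : Fin n => (i : ℕ) < m), f i)
        = ∑ i ∈ Finset.range m, F i := by
    intro f F hF m hm
    rw [Finset.sum_filter]
    have h1 : ∑ i : Fin n, (if (i : ℕ) < m then f i else 0)
        = ∑ i ∈ Finset.range n, (if i < m then F i else 0) := by
      rw [← Fin.sum_univ_eq_sum_range (fun j => if j < m then F j else 0) n]
      exact Finset.sum_congr rfl (fun i _ => by by_cases h : (i : ℕ) < m <;> simp [h, hF])
    rw [h1, ← Finset.sum_filter]
    congr 1
    ext j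
    simp only [Finset.mem_filter, Finset.mem_range]
    omega
  -- total sums
  have htotL : (∑ i, lam i) = ∑ i ∈ Finset.range n, L i := by
    rw [Finset.sum_congr rfl (fun i _ => (hLval i).symm), Fin.sum_univ_eq_sum_range]
  have htotQ : (∑ i, sq i) = ∑ i ∈ Finset.range n, Q i := by
    rw [Finset.sum_congr rfl (fun i _ => (hQval i).symm), Fin.sum_univ_eq_sum_range]
  have hsplit : ∀ (F : ℕ → ℝ) (m : ℕ), m ≤ n →
      ∑ i ∈ Finset.range m, F i + ∑ i ∈ Finset.Ico m n, F i = ∑ i ∈ Finset.range n, F i := by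
    intro F m hm
    rw [Finset.range_eq_Ico, Finset.range_eq_Ico]
    exact Finset.sum_Ico_consecutive F (Nat.zero_le m) hm
  -- tail inequality
  have htail : ∑ i ∈ Finset.Ico kstar n, L i ≤ ∑ i ∈ Finset.Ico kstar n, Q i := by
    rcases eq_or_lt_of_le hk_le with h | h
    · subst h; simp
    · have hmaj' := hmaj kstar h
      rw [key' sq Q hQval kstar hk_le, key' lam L hLval kstar hk_le] at hmaj'
      have hteq : ∑ i ∈ Finset.range n, L i = ∑ i ∈ Finset.range n, Q i := by
        rw [← htotL, ← htotQ, heq]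
      have h1 := hsplit L kstar hk_le
      have h2 := hsplit Q kstar hk_le
      linarith
  -- middle part
  have hmid : ∑ i ∈ Finset.Ico jstar kstar, L i < ((kstar : ℝ) - jstar) * c := by
    have hne : (Finset.Ico jstar kstar).Nonempty := by
      rw [Finset.nonempty_Ico]; exact hjk
    have hlt : ∀ i ∈ Finset.Ico jstar kstar, L i < c := by
      intro i hi
      rw [Finset.mem_Ico] at hi
      have hin : i < n := lt_of_lt_of_le hi.2 hk_le
      have := hj2 ⟨i, hin⟩ hi.1
      simpa [hL, hin] using this
    calc ∑ i ∈ Finset.Ico jstar kstar, L i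
        < ∑ _i ∈ Finset.Ico jstar kstar, c := Finset.sum_lt_sum_of_nonempty hne hlt
      _ = ((kstar : ℝ) - jstar) * c := by
          rw [Finset.sum_const, Nat.card_Ico, nsmul_eq_mul, Nat.cast_sub hjk.le]
  -- combine
  rw [key lam L hLval jstar, key sq Q hQval kstar]
  have hIcosplit : ∑ i ∈ Finset.Ico jstar kstar, L i + ∑ i ∈ Finset.Ico kstar n, L i
      = ∑ i ∈ Finset.Ico jstar n, L i :=
    Finset.sum_Ico_consecutive L hjk.le hk_le
  have hkpos : (0:ℝ) ≤ (kstar : ℝ) := Nat.cast_nonneg _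
  have hkc : (kstar : ℝ) * c ≤ (kstar : ℝ) * ctil := mul_le_mul_of_nonneg_left hcc hkpos
  nlinarith [htail, hmid, hIcosplit]
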